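/- Let V be an additive abelian group, τ, σ, ρ : V → ℝ satisfying the three Ablowitz-Ladik-Hirota relations for pairs from {α, β, γ} (with skew-symmetric a and symmetric b), with τ nowhere zero. Then the identity T(α,β,γ)(x) = 0 holds for all x, where T(α,β,γ)(x) := a(α,β)·ρ(x)·σ(x+α+β+γ) − b(α,γ)·τ(x+α)·τ(x+β+γ) + b(β,γ)·τ(x+β)·τ(x+α+γ). -/
import Mathlib

theorem T_identity
    {V : Type*} [AddCommGroup V]
    (τ σ ρ : V → ℝ) (α β γ : V)
    (a b : V → V → ℝ)
    (haskew : ∀ ξ η, a ξ η = - a η ξ)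
    (hbsymm : ∀ ξ η, b ξ η = b η ξ)
    (hσ : ∀ ξ ∈ ({α, β, γ} : Set V), ∀ η ∈ ({α, β, γ} : Set V), ∀ x : V,
      a ξ η * τ x * σ (x + ξ + η) =
        σ (x + ξ) * τ (x + η) - τ (x + ξ) * σ (x + η))
    (hρ : ∀ ξ ∈ ({α, β, γ} : Set V), ∀ η ∈ ({α, β, γ} : Set V), ∀ x : V,
      a ξ η * ρ x * τ (x + ξ + η) =
        τ (x + ξ) * ρ (x + η) - ρ (x + ξ) * τ (x + η))
    (ht : ∀ ξ ∈ ({α, β, γ} : Set V), ∀ η ∈ ({α, β, γ} : Set V), ∀ x : V,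
      τ x * τ (x + ξ + η) + ρ x * σ (x + ξ + η) =
        b ξ η * τ (x + ξ) * τ (x + η))
    (hτ0 : ∀ x, τ x ≠ 0) :
    ∀ x : V,
      a α β * ρ x * σ (x + α + β + γ)
      - b α γ * τ (x + α) * τ (x + β + γ)
      + b β γ * τ (x + β) * τ (x + α + γ) = 0 := by
  intro x
  have h1 := hσ α (by simp) β (by simp) (x + γ)
  have h2 := ht α (by simp) γ (by simp) x
  have h3 := ht β (by simp) γ (by simp) x
  rw [show x + γ + α + β = x + α + β + γ by abel,
      show x + γ + α = x + α + γ by abel,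
      show x + γ + β = x + β + γ by abel] at h1
  have key : (a α β * ρ x * σ (x + α + β + γ)
      - b α γ * τ (x + α) * τ (x + β + γ)
      + b β γ * τ (x + β) * τ (x + α + γ)) * τ (x + γ) = 0 := by
    linear_combination ρ x * h1 + τ (x + β + γ) * h2 - τ (x + α + γ) * h3
  exact (mul_eq_zero.mp key).resolve_right (hτ0 (x + γ))
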